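/- Let P be a Markov kernel on a countable set S satisfying the Doeblin condition P(x, ·) ≥ c·δ_{x_0}(·) for all x ∈ S, where c ∈ (0,1) and x_0 ∈ S is fixed. Then for any probability measures μ, ν on S, d_TV(μP, νP) ≤ (1-c)·d_TV(μ, ν). -/

import Mathlib

set_option maxHeartbeats 1000000


/-- Let `P` be a Markov kernel on a countable set `S` satisfying the
Doeblin condition `P x · ≥ c·δ_{x₀}` for a fixed `x₀ ∈ S` and `c ∈ (0,1)`. Then for
any probability measures `μ, ν` on `S`, `d_TV(μP, νP) ≤ (1-c)·d_TV(μ, ν)`. -/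
theorem stmt10 {S : Type*} [Countable S] (P : S → S → ℝ) (c : ℝ)
    (hc : c ∈ Set.Ioo (0 : ℝ) 1) (x₀ : S)
    (hPnn : ∀ x y, 0 ≤ P x y) (hPsummable : ∀ x, Summable (P x))
    (hPsum : ∀ x, ∑' y, P x y = 1)
    (hDoeblin : ∀ x, c ≤ P x x₀)
    (μ ν : S → ℝ) (hμnn : ∀ x, 0 ≤ μ x) (hνnn : ∀ x, 0 ≤ ν x)
    (hμs : Summable μ) (hνs : Summable ν)
    (hμ1 : ∑' x, μ x = 1) (hν1 : ∑' x, ν x = 1) :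
    (1 / 2) * ∑' y, |(∑' x, μ x * P x y) - (∑' x, ν x * P x y)| ≤
      (1 - c) * ((1 / 2) * ∑' x, |μ x - ν x|) := by
  classical
  set f : S → ℝ := fun x => μ x - ν x with hf
  have hfs : Summable f := hμs.sub hνs
  have hf0 : ∑' x, f x = 0 := by
    rw [hf]
    rw [Summable.tsum_sub hμs hνs, hμ1, hν1, sub_self]
  -- the residual kernel
  set Q : S → S → ℝ := fun x y => P x y - (if y = x₀ then c else 0) with hQ
  have hinds : Summable (fun y : S => if y = x₀ then c else 0) :=
    summable_of_ne_finset_zero (s := {x₀}) (by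
      intro b hb
      simp only [Finset.mem_singleton] at hb
      simp [hb])
  have hQnn : ∀ x y, 0 ≤ Q x y := by
    intro x y
    simp only [hQ]
    by_cases h : y = x₀
    · simp [h, sub_nonneg, hDoeblin x]
    · simp [h, hPnn]
  have hQs : ∀ x, Summable (Q x) := fun x => (hPsummable x).sub hinds
  have hQ1 : ∀ x, ∑' y, Q x y = 1 - c := by
    intro x
    simp only [hQ]
    rw [Summable.tsum_sub (hPsummable x) hinds, hPsum, tsum_ite_eq]
  have hP1 : ∀ x y, P x y ≤ 1 := by
    intro x y
    have := Summable.le_tsum (hPsummable x) y (fun j _ => hPnn x j)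
    rwa [hPsum] at this
  have hQleP : ∀ x y, Q x y ≤ P x y := by
    intro x y
    simp only [hQ]
    by_cases h : y = x₀ <;> simp [h, hc.1.le]
  -- summability of the pointwise families
  have habs : ∀ x y, |f x * P x y| ≤ |f x| := by
    intro x y
    rw [abs_mul, abs_of_nonneg (hPnn x y)]
    exact mul_le_of_le_one_right (abs_nonneg _) (hP1 x y)
  have h1 : ∀ y, Summable fun x => f x * P x y := by
    intro y
    refine Summable.of_abs ?_
    exact hfs.abs.of_nonneg_of_le (fun x => abs_nonneg _) (fun x => habs x y)
  have hμP : ∀ y, Summable fun x => μ x * P x y := by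
    intro y
    refine hμs.of_nonneg_of_le (fun x => mul_nonneg (hμnn x) (hPnn x y)) ?_
    intro x
    exact mul_le_of_le_one_right (hμnn x) (hP1 x y)
  have hνP : ∀ y, Summable fun x => ν x * P x y := by
    intro y
    refine hνs.of_nonneg_of_le (fun x => mul_nonneg (hνnn x) (hPnn x y)) ?_
    intro x
    exact mul_le_of_le_one_right (hνnn x) (hP1 x y)
  have h2 : ∀ y, Summable fun x => f x * Q x y := by
    intro y
    refine Summable.of_abs ?_
    refine hfs.abs.of_nonneg_of_le (fun x => abs_nonneg _) (fun x => ?_)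
    rw [abs_mul, abs_of_nonneg (hQnn x y)]
    exact mul_le_of_le_one_right (abs_nonneg _) ((hQleP x y).trans (hP1 x y))
  have h3 : ∀ y, Summable fun x => |f x| * Q x y := by
    intro y
    refine hfs.abs.of_nonneg_of_le
      (fun x => mul_nonneg (abs_nonneg _) (hQnn x y)) (fun x => ?_)
    exact mul_le_of_le_one_right (abs_nonneg _) ((hQleP x y).trans (hP1 x y))
  -- rewrite μP - νP using f
  have hdiff : ∀ y, (∑' x, μ x * P x y) - (∑' x, ν x * P x y) = ∑' x, f x * Q x y := by
    intro y
    rw [← Summable.tsum_sub (hμP y) (hνP y)]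
    have e1 : ∀ x, μ x * P x y - ν x * P x y = f x * P x y := by
      intro x; simp [hf]; ring
    rw [tsum_congr e1]
    have e2 : ∀ x, f x * P x y = f x * Q x y + f x * (if y = x₀ then c else 0) := by
      intro x; simp only [hQ]; ring
    rw [tsum_congr e2, Summable.tsum_add (h2 y) (by
      simpa [tsum_mul_right] using (hfs.mul_right (if y = x₀ then c else 0))),
      tsum_mul_right, hf0]
    ring
  -- Fubini for the dominating family
  have hFsum : Summable (fun p : S × S => |f p.1| * Q p.1 p.2) := by
    rw [summable_prod_of_nonneg (fun p => mul_nonneg (abs_nonneg _) (hQnn p.1 p.2))]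
    constructor
    · intro x
      simpa using (hQs x).mul_left |f x|
    · have : (fun x => ∑' y, |f x| * Q x y) = fun x => |f x| * (1 - c) := by
        funext x
        rw [tsum_mul_left, hQ1 x]
      rw [this]
      exact hfs.abs.mul_right _
  have hFswap : Summable (fun p : S × S => |f p.2| * Q p.2 p.1) := by
    have := (Equiv.prodComm S S).summable_iff.mpr hFsum
    exact this
  have hgs : Summable fun y => ∑' x, |f x| * Q x y := by
    have h := (summable_prod_of_nonneg
      (f := fun p : S × S => |f p.2| * Q p.2 p.1)
      (fun p => mul_nonneg (abs_nonneg _) (hQnn p.2 p.1))).mp hFswap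
    exact h.2
  have hcomm : ∑' y, ∑' x, |f x| * Q x y = (1 - c) * ∑' x, |f x| := by
    rw [Summable.tsum_comm' (f := fun x y => |f x| * Q x y) hFsum
      (fun x => (hQs x).mul_left _) (fun y => h3 y)]
    calc ∑' x, ∑' y, |f x| * Q x y = ∑' x, |f x| * (1 - c) :=
          tsum_congr fun x => by rw [tsum_mul_left, hQ1 x]
      _ = (1 - c) * ∑' x, |f x| := by rw [tsum_mul_right, mul_comm]
  -- pointwise bound and conclusion
  have hpt : ∀ y, |(∑' x, μ x * P x y) - (∑' x, ν x * P x y)| ≤ ∑' x, |f x| * Q x y := by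
    intro y
    rw [hdiff y]
    have habsS : Summable fun x => |f x * Q x y| :=
      (h3 y).congr fun x => by rw [abs_mul, abs_of_nonneg (hQnn x y)]
    have hb := norm_tsum_le_tsum_norm (f := fun x => f x * Q x y)
      (by simpa only [Real.norm_eq_abs] using habsS)
    simp only [Real.norm_eq_abs] at hb
    calc |∑' x, f x * Q x y| ≤ ∑' x, |f x * Q x y| := hb
      _ = ∑' x, |f x| * Q x y :=
          tsum_congr fun x => by rw [abs_mul, abs_of_nonneg (hQnn x y)]
  have hLHSs : Summable fun y => |(∑' x, μ x * P x y) - (∑' x, ν x * P x y)| :=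
    hgs.of_nonneg_of_le (fun y => abs_nonneg _) hpt
  have hmain : ∑' y, |(∑' x, μ x * P x y) - (∑' x, ν x * P x y)| ≤
      (1 - c) * ∑' x, |f x| := by
    calc ∑' y, |(∑' x, μ x * P x y) - (∑' x, ν x * P x y)|
        ≤ ∑' y, ∑' x, |f x| * Q x y := Summable.tsum_le_tsum hpt hLHSs hgs
      _ = (1 - c) * ∑' x, |f x| := hcomm
  have h12 : (0:ℝ) ≤ 1/2 := by norm_num
  calc (1 / 2) * ∑' y, |(∑' x, μ x * P x y) - (∑' x, ν x * P x y)|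
      ≤ (1/2) * ((1 - c) * ∑' x, |f x|) := by
        exact mul_le_mul_of_nonneg_left hmain h12
    _ = (1 - c) * ((1 / 2) * ∑' x, |μ x - ν x|) := by rw [hf]; ring
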